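/- Let (W,w) be a fusion frame for H. Then a fusion frame (V,v) is a Q-component-preserving dual fusion frame of (W,w) if and only if there exists a left inverse A of T*_{W,w} such that V_i = A M_i 𝒲 for each i = 1,…,m and Q = Q_{A,v}. Moreover, every left inverse of T*_{W,w} is of the form T_{V,v} Q where (V,v) is some Q-component-preserving dual fusion frame of (W,w). -/

import Mathlib

noncomputable section

open scoped InnerProductSpace

variable {𝕜 : Type} [RCLike 𝕜]
variable {H : Type} [NormedAddCommGroup H] [InnerProductSpace 𝕜 H] [FiniteDimensional 𝕜 H]
variable {m : ℕ}

/-- The Hilbert space `𝒲 = ⊕ᵢ Wᵢ` of a fusion sequence, with the ℓ² inner product. -/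
abbrev FFSpace (W : Fin m → Submodule 𝕜 H) : Type := PiLp 2 (fun i => ↥(W i))

/-- The synthesis operator `T_{W,w} : 𝒲 → H`, `(fᵢ)ᵢ ↦ Σᵢ wᵢ fᵢ`. -/
def synthOp (W : Fin m → Submodule 𝕜 H) (w : Fin m → ℝ) : FFSpace W →ₗ[𝕜] H where
  toFun f := ∑ i, (w i : 𝕜) • (f i : H)
  map_add' f g := by
    simp [Finset.sum_add_distrib, smul_add]
  map_smul' c f := by
    simp [Finset.smul_sum]
    congr 1; funext i; rw [smul_comm]

/-- The analysis operator `T*_{W,w} : H → 𝒲`, `f ↦ (wᵢ π_{Wᵢ} f)ᵢ`. -/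
def analysisOp (W : Fin m → Submodule 𝕜 H) (w : Fin m → ℝ) : H →ₗ[𝕜] FFSpace W where
  toFun f := WithLp.toLp 2 (fun i => (w i : 𝕜) • (Submodule.orthogonalProjectionOnto (W i) f))
  map_add' f g := by
    refine PiLp.ext fun i => ?_; simp [smul_add]
  map_smul' c f := by
    refine PiLp.ext fun i => ?_; simp; rw [smul_comm]

/-- The coordinate operator `M_{J,W} : 𝒲 → 𝒲`, keeping the coordinates in `J`. -/
def MJ (W : Fin m → Submodule 𝕜 H) (J : Finset (Fin m)) : FFSpace W →ₗ[𝕜] FFSpace W where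
  toFun f := WithLp.toLp 2 (fun j => if j ∈ J then f j else 0)
  map_add' f g := by
    refine PiLp.ext fun j => ?_; by_cases h : j ∈ J <;> simp [h]
  map_smul' c f := by
    refine PiLp.ext fun j => ?_; by_cases h : j ∈ J <;> simp [h]

/-- `Q : 𝒲 → 𝒱` is block-diagonal if `Q M_{j,W} 𝒲 ⊆ M_{j,V} 𝒱` for all `j`. -/
def IsBlockDiagonal (W V : Fin m → Submodule 𝕜 H) (Q : FFSpace W →ₗ[𝕜] FFSpace V) : Prop :=
  ∀ j, LinearMap.range (Q ∘ₗ MJ W {j}) ≤ LinearMap.range (MJ V {j})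

/-- `Q : 𝒲 → 𝒱` is component preserving if `Q M_{j,W} 𝒲 = M_{j,V} 𝒱` for all `j`. -/
def IsComponentPreserving (W V : Fin m → Submodule 𝕜 H) (Q : FFSpace W →ₗ[𝕜] FFSpace V) : Prop :=
  ∀ j, LinearMap.range (Q ∘ₗ MJ W {j}) = LinearMap.range (MJ V {j})

/-- The orthogonal projection onto `U` as an endomorphism of `H`. -/
def projL (U : Submodule 𝕜 H) : H →ₗ[𝕜] H :=
  U.subtype ∘ₗ (Submodule.orthogonalProjectionOnto U : H →L[𝕜] U).toLinearMap

/-- The map `Q_{A,v} : 𝒲 → ⊕ᵢ A Mᵢ 𝒲`, `(f_j)_j ↦ ((1/vᵢ) A Mᵢ (f_j)_j)ᵢ`. -/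
def QAv (W : Fin m → Submodule 𝕜 H) (A : FFSpace W →ₗ[𝕜] H) (v : Fin m → ℝ) :
    FFSpace W →ₗ[𝕜] FFSpace (fun i => LinearMap.range (A ∘ₗ MJ W {i})) where
  toFun f := WithLp.toLp 2 (fun i => ⟨(v i : 𝕜)⁻¹ • A (MJ W {i} f),
    Submodule.smul_mem _ _ (LinearMap.mem_range.mpr ⟨f, rfl⟩)⟩)
  map_add' f g := by
    refine PiLp.ext fun i => ?_; apply Subtype.ext; simp [smul_add]
  map_smul' c f := by
    refine PiLp.ext fun i => ?_; apply Subtype.ext; simp; rw [smul_comm]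

set_option linter.unusedSectionVars false

lemma MJ_apply' (W : Fin m → Submodule 𝕜 H) (J : Finset (Fin m)) (f : FFSpace W) (j : Fin m) :
    MJ W J f j = if j ∈ J then f j else 0 := rfl

lemma sum_MJ (W : Fin m → Submodule 𝕜 H) (f : FFSpace W) :
    ∑ i, MJ W {i} f = f := by
  refine PiLp.ext fun j => ?_
  rw [WithLp.ofLp_sum, Finset.sum_apply]
  simp [MJ_apply']

lemma mem_range_MJ_single (V : Fin m → Submodule 𝕜 H) (j : Fin m) (e : FFSpace V) :
    e ∈ LinearMap.range (MJ V {j}) ↔ ∀ k, k ≠ j → e k = 0 := by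
  constructor
  · rintro ⟨g, rfl⟩ k hk
    simp [MJ_apply', hk]
  · intro h
    exact ⟨e, by refine PiLp.ext fun k => ?_; by_cases hk : k = j <;> simp [MJ_apply', hk, h k]⟩

lemma MJ_MJ (W : Fin m → Submodule 𝕜 H) (i j : Fin m) (f : FFSpace W) (h : i ≠ j) :
    MJ W {i} (MJ W {j} f) = 0 := by
  refine PiLp.ext fun k => ?_
  by_cases hk : k = i
  · subst hk; simp [MJ_apply', h]
  · simp [MJ_apply', hk]

lemma MJ_MJ_self (W : Fin m → Submodule 𝕜 H) (i : Fin m) (f : FFSpace W) :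
    MJ W {i} (MJ W {i} f) = MJ W {i} f := by
  refine PiLp.ext fun k => ?_
  by_cases hk : k = i <;> simp [MJ_apply', hk]

lemma synthOp_apply (V : Fin m → Submodule 𝕜 H) (v : Fin m → ℝ) (g : FFSpace V) :
    synthOp V v g = ∑ i, (v i : 𝕜) • (g i : H) := rfl

lemma synth_Q_eq {W V : Fin m → Submodule 𝕜 H} {v : Fin m → ℝ} (hv : ∀ i, 0 < v i)
    (A : FFSpace W →ₗ[𝕜] H) (Q : FFSpace W →ₗ[𝕜] FFSpace V)
    (hQ : ∀ f i, ((Q f) i : H) = (v i : 𝕜)⁻¹ • A (MJ W {i} f)) (f : FFSpace W) :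
    synthOp V v (Q f) = A f := by
  rw [synthOp_apply]
  have h2 : ∀ i : Fin m, (v i : 𝕜) • ((Q f) i : H) = A (MJ W {i} f) := by
    intro i
    rw [hQ, smul_smul, mul_inv_cancel₀, one_smul]
    exact RCLike.ofReal_ne_zero.mpr (hv i).ne'
  simp_rw [h2]
  rw [← map_sum, sum_MJ]

/-- characterization of component preserving dual fusion frames of a fusion
frame `(W,w)` via the left inverses of the analysis operator `T*_{W,w}`; moreover every
left inverse of `T*_{W,w}` arises as `T_{V,v} Q` for some `Q`-component-preserving dual
fusion frame `(V,v)`. -/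
theorem componentPreserving_dual_iff_leftInverse
    {𝕜 : Type} [RCLike 𝕜] {H : Type} [NormedAddCommGroup H] [InnerProductSpace 𝕜 H]
    [FiniteDimensional 𝕜 H] {m : ℕ}
    (W : Fin m → Submodule 𝕜 H) (w : Fin m → ℝ) (hw : ∀ i, 0 < w i)
    (hW : ⨆ i, W i = ⊤) :
    (∀ (V : Fin m → Submodule 𝕜 H) (v : Fin m → ℝ), (∀ i, 0 < v i) →
      ∀ Q : FFSpace W →ₗ[𝕜] FFSpace V,
      ((⨆ i, V i = ⊤) ∧ synthOp V v ∘ₗ Q ∘ₗ analysisOp W w = LinearMap.id ∧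
          IsComponentPreserving W V Q) ↔
        (∃ A : FFSpace W →ₗ[𝕜] H, A ∘ₗ analysisOp W w = LinearMap.id ∧
          (∀ i, V i = LinearMap.range (A ∘ₗ MJ W {i})) ∧
          (∀ f i, ((Q f) i : H) = (v i : 𝕜)⁻¹ • A (MJ W {i} f)))) ∧
    (∀ A : FFSpace W →ₗ[𝕜] H, A ∘ₗ analysisOp W w = LinearMap.id →
      ∃ (V : Fin m → Submodule 𝕜 H) (v : Fin m → ℝ), (∀ i, 0 < v i) ∧
        ∃ Q : FFSpace W →ₗ[𝕜] FFSpace V,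
          (⨆ i, V i = ⊤) ∧ synthOp V v ∘ₗ Q ∘ₗ analysisOp W w = LinearMap.id ∧
          IsComponentPreserving W V Q ∧ A = synthOp V v ∘ₗ Q) := by
  -- The backward implication of the iff, proved once so it can be reused in part 2.
  have main : ∀ (V : Fin m → Submodule 𝕜 H) (v : Fin m → ℝ), (∀ i, 0 < v i) →
      ∀ Q : FFSpace W →ₗ[𝕜] FFSpace V,
      ∀ A : FFSpace W →ₗ[𝕜] H, A ∘ₗ analysisOp W w = LinearMap.id →
        (∀ i, V i = LinearMap.range (A ∘ₗ MJ W {i})) →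
        (∀ f i, ((Q f) i : H) = (v i : 𝕜)⁻¹ • A (MJ W {i} f)) →
        (⨆ i, V i = ⊤) ∧ synthOp V v ∘ₗ Q ∘ₗ analysisOp W w = LinearMap.id ∧
          IsComponentPreserving W V Q := by
    intro V v hv Q A hA hV hQ
    have hAid : ∀ h : H, A (analysisOp W w h) = h := fun h =>
      congrArg (· h) hA
    refine ⟨?_, ?_, ?_⟩
    · -- ⨆ V i = ⊤
      rw [eq_top_iff]
      intro h _
      have : h = ∑ i, A (MJ W {i} (analysisOp W w h)) := by
        rw [← map_sum, sum_MJ, hAid]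
      rw [this]
      refine Submodule.sum_mem _ fun i _ => Submodule.mem_iSup_of_mem i ?_
      rw [hV i]
      exact ⟨analysisOp W w h, rfl⟩
    · -- duality
      ext h
      simp only [LinearMap.comp_apply, LinearMap.id_apply]
      rw [synth_Q_eq hv A Q hQ, hAid]
    · -- component preserving
      intro j
      apply le_antisymm
      · rintro e ⟨f, rfl⟩
        rw [mem_range_MJ_single]
        intro k hk
        have : ((Q (MJ W {j} f)) k : H) = 0 := by
          rw [hQ, MJ_MJ W k j f hk, map_zero, smul_zero]
        exact Subtype.ext this
      · rintro e ⟨g, rfl⟩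
        -- component j of MJ V {j} g lies in V j = range (A ∘ Mⱼ)
        have hgj : ((MJ V {j} g) j : H) ∈ LinearMap.range (A ∘ₗ MJ W {j}) := by
          rw [← hV j]; exact ((MJ V {j} g) j).2
        obtain ⟨f₀, hf₀⟩ := hgj
        simp only [LinearMap.comp_apply] at hf₀
        refine ⟨(v j : 𝕜) • f₀, ?_⟩
        simp only [LinearMap.comp_apply]
        refine PiLp.ext fun k => ?_
        by_cases hk : k = j
        · subst hk
          apply Subtype.ext
          rw [hQ, MJ_MJ_self, map_smul, map_smul, smul_smul, inv_mul_cancel₀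
            (RCLike.ofReal_ne_zero.mpr (hv k).ne'), one_smul, hf₀]
        · apply Subtype.ext
          rw [hQ, MJ_MJ W k j _ hk, map_zero, smul_zero, MJ_apply']
          simp [hk]
  refine ⟨fun V v hv Q => ⟨?_, ?_⟩, ?_⟩
  · -- forward direction of the iff
    rintro ⟨hVtop, hdual, hcp⟩
    set A : FFSpace W →ₗ[𝕜] H := synthOp V v ∘ₗ Q with hAdef
    have hA : A ∘ₗ analysisOp W w = LinearMap.id := by
      rw [hAdef, LinearMap.comp_assoc]; exact hdual
    -- Q(Mⱼ f) is supported on j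
    have hsupp : ∀ (f : FFSpace W) (j k : Fin m), k ≠ j → (Q (MJ W {j} f)) k = 0 := by
      intro f j k hk
      have : Q (MJ W {j} f) ∈ LinearMap.range (MJ V {j}) := by
        rw [← hcp j]; exact ⟨f, rfl⟩
      exact (mem_range_MJ_single V j _).mp this k hk
    -- A(Mⱼ f) = vⱼ • (Q(Mⱼ f))ⱼ
    have hAM : ∀ (f : FFSpace W) (j : Fin m),
        A (MJ W {j} f) = (v j : 𝕜) • ((Q (MJ W {j} f)) j : H) := by
      intro f j
      rw [hAdef]
      simp only [LinearMap.comp_apply]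
      rw [synthOp_apply]
      rw [Finset.sum_eq_single j]
      · intro i _ hi
        rw [hsupp f j i hi]; simp
      · intro h; exact absurd (Finset.mem_univ j) h
    have hQA : ∀ (f : FFSpace W) (i : Fin m),
        ((Q f) i : H) = (v i : 𝕜)⁻¹ • A (MJ W {i} f) := by
      intro f i
      have h1 : Q f = ∑ j, Q (MJ W {j} f) := by
        rw [← map_sum, sum_MJ]
      have h2 : (Q f) i = (Q (MJ W {i} f)) i := by
        rw [h1, WithLp.ofLp_sum, Finset.sum_apply, Finset.sum_eq_single i]
        · intro j _ hj; exact hsupp f j i hj.symm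
        · intro h; exact absurd (Finset.mem_univ i) h
      rw [h2, hAM, smul_smul, inv_mul_cancel₀
        (RCLike.ofReal_ne_zero.mpr (hv i).ne'), one_smul]
    refine ⟨A, hA, ?_, hQA⟩
    -- V i = range (A ∘ Mᵢ)
    intro i
    apply le_antisymm
    · intro g hg
      -- the tuple supported on i with value g
      set e : FFSpace V := WithLp.toLp 2 (Pi.single i (⟨g, hg⟩ : V i)) with he
      have : e ∈ LinearMap.range (MJ V {i}) := by
        rw [mem_range_MJ_single]
        intro k hk
        rw [he]; exact Pi.single_eq_of_ne hk _
      rw [← hcp i] at this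
      obtain ⟨f, hf⟩ := this
      simp only [LinearMap.comp_apply] at hf
      have : g = ((Q (MJ W {i} f)) i : H) := by
        rw [hf, he, WithLp.ofLp_toLp, Pi.single_eq_same]
      rw [this, hQA, MJ_MJ_self]
      exact Submodule.smul_mem _ _ ⟨f, rfl⟩
    · rintro g ⟨f, rfl⟩
      have : A (MJ W {i} f) = (v i : 𝕜) • ((Q (MJ W {i} f)) i : H) := hAM f i
      simp only [LinearMap.comp_apply]
      rw [this]
      exact Submodule.smul_mem _ _ ((Q (MJ W {i} f)) i).2
  · -- backward direction of the iff
    rintro ⟨A, hA, hV, hQ⟩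
    exact main V v hv Q A hA hV hQ
  · -- part 2
    intro A hA
    refine ⟨fun i => LinearMap.range (A ∘ₗ MJ W {i}), fun _ => 1, fun _ => one_pos,
      QAv W A (fun _ => 1), ?_⟩
    have hQ : ∀ (f : FFSpace W) (i : Fin m),
        ((QAv W A (fun _ => 1) f) i : H) = ((1 : ℝ) : 𝕜)⁻¹ • A (MJ W {i} f) := by
      intro f i; rfl
    obtain ⟨h1, h2, h3⟩ := main _ _ (fun _ => one_pos) (QAv W A (fun _ => 1)) A hA
      (fun i => rfl) hQ
    refine ⟨h1, h2, h3, ?_⟩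
    ext f
    simp only [LinearMap.comp_apply]
    exact (synth_Q_eq (fun _ => one_pos) A (QAv W A (fun _ => 1)) hQ f).symm
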